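/- For every learning setup (measurable space X, probability measure D on X × {0,1}, countable hypothesis class (h_i)_{i∈I} with prior π), every sample size m ≥ 1, and every δ ∈ (0,1): with probability at least 1-δ over S ~ D^m, simultaneously for every i ∈ I with π(i) > 0, KL( L_S(i) ‖ L(i) ) ≤ ( |i|_π + log₂((m+1)/δ) ) / m. -/

import Mathlib

open MeasureTheory Filter

noncomputable def binEnt (p : ℝ) : ℝ :=
  -(p * Real.logb 2 p) - (1 - p) * Real.logb 2 (1 - p)

noncomputable def klBin (a b : ℝ) : ℝ :=
  a * Real.logb 2 (a / b) + (1 - a) * Real.logb 2 ((1 - a) / (1 - b))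

noncomputable def klBinE (a b : ℝ) : EReal :=
  if (b = 0 ∨ b = 1) ∧ a ≠ b then ⊤ else ((klBin a b : ℝ) : EReal)

structure LearningSetup (X : Type) [MeasurableSpace X] (I : Type) where
  countable : Countable I
  D : Measure (X × Bool)
  isProb : IsProbabilityMeasure D
  hyp : I → X → Bool
  hyp_measurable : ∀ i, Measurable (hyp i)
  prior : I → ℝ
  prior_nonneg : ∀ i, 0 ≤ prior i
  prior_le_one : ∀ i, prior i ≤ 1
  prior_tsum_le_one : ∑' i, ENNReal.ofReal (prior i) ≤ 1

namespace LearningSetup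

variable {X I : Type} [MeasurableSpace X] (L : LearningSetup X I)

/-- Description length `|i|_π = -log₂ π(i)`. -/
noncomputable def desc (i : I) : ℝ := -Real.logb 2 (L.prior i)

/-- Population error `L(i)`. -/
noncomputable def popErr (i : I) : ℝ := (L.D {p | L.hyp i p.1 ≠ p.2}).toReal

/-- Number of sample errors `m · L_S(i)`. -/
def errCount (m : ℕ) (i : I) (S : Fin m → X × Bool) : ℕ :=
  (Finset.univ.filter fun t => L.hyp i (S t).1 ≠ (S t).2).card

/-- Empirical error `L_S(i)`. -/
noncomputable def empErr (m : ℕ) (i : I) (S : Fin m → X × Bool) : ℝ :=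
  (L.errCount m i S : ℝ) / (m : ℝ)

/-- MDL objective `J_λ(i, S) = λ·|i|_π + log₂ C(m, m·L_S(i))`. -/
noncomputable def J (lam : ℝ) (m : ℕ) (i : I) (S : Fin m → X × Bool) : ℝ :=
  lam * L.desc i + Real.logb 2 (m.choose (L.errCount m i S) : ℝ)

/-- The m-fold product measure `D^m`. -/
noncomputable def sampleMeasure (m : ℕ) : Measure (Fin m → X × Bool) :=
  haveI := L.isProb
  Measure.pi fun _ => L.D

/-- `A` is an MDL_λ selection rule for sample size `m`. -/
def IsMDLRule (lam : ℝ) (m : ℕ) (A : (Fin m → X × Bool) → I) : Prop :=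
  (@Measurable (Fin m → X × Bool) I inferInstance ⊤ A) ∧
  ∀ᵐ S ∂ L.sampleMeasure m,
    L.empErr m (A S) S ≤ 1 / 2 ∧
    ∀ i : I, L.empErr m i S ≤ 1 / 2 → L.J lam m (A S) S ≤ L.J lam m i S

/-- Expected population error `E_{S ~ D^m}[L(A(S))]`. -/
noncomputable def expectedRisk (m : ℕ) (A : (Fin m → X × Bool) → I) : ℝ :=
  ∫ S, L.popErr (A S) ∂ L.sampleMeasure m

end LearningSetup


/- ======================  Auxiliary lemmas  ====================== -/

open scoped ENNReal NNReal

section AuxReal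
open Finset

lemma term_le_one' {a : ℝ} (ha0 : 0 ≤ a) (ha1 : a ≤ 1) (m k : ℕ) (hk : k ≤ m) :
    a ^ k * (1 - a) ^ (m - k) * (m.choose k : ℝ) ≤ 1 := by
  have h : (1:ℝ) = ∑ j ∈ range (m+1), a ^ j * (1 - a) ^ (m - j) * (m.choose j : ℝ) := by
    rw [← add_pow a (1-a) m]; ring_nf
  calc a ^ k * (1 - a) ^ (m - k) * (m.choose k : ℝ)
      ≤ ∑ j ∈ range (m+1), a ^ j * (1 - a) ^ (m - j) * (m.choose j : ℝ) := by
        apply Finset.single_le_sum (f := fun j => a ^ j * (1 - a) ^ (m - j) * (m.choose j : ℝ))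
        · intro j _; have : (0:ℝ) ≤ 1 - a := by linarith
          positivity
        · simpa using Nat.lt_succ_of_le hk
    _ = 1 := h.symm

lemma rpow_mul_logb' (k : ℕ) {z : ℝ} (hz : 0 < z) :
    (2:ℝ) ^ ((k:ℝ) * Real.logb 2 z) = z ^ k := by
  rw [mul_comm, Real.rpow_mul (by norm_num), Real.rpow_logb (by norm_num) (by norm_num) hz,
    Real.rpow_natCast]

lemma chernoff_pt (m k : ℕ) (hm : 1 ≤ m) (hk : k ≤ m) {p : ℝ} (hp0 : 0 ≤ p) (hp1 : p ≤ 1)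
    (hfin : ¬((p = 0 ∨ p = 1) ∧ ((k:ℝ)/m ≠ p))) :
    (m.choose k : ℝ) * p ^ k * (1 - p) ^ (m - k) ≤
      (2:ℝ) ^ (-(m:ℝ) * klBin ((k:ℝ)/m) p) := by
  have hm0 : (0:ℝ) < m := by exact_mod_cast hm
  set a : ℝ := (k:ℝ)/m with ha
  have ha0 : 0 ≤ a := by positivity
  have ha1 : a ≤ 1 := by rw [ha, div_le_one hm0]; exact_mod_cast hk
  have hma : (m:ℝ) * a = k := by rw [ha]; field_simp
  have hma' : (m:ℝ) * (1 - a) = ((m - k : ℕ) : ℝ) := by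
    rw [mul_sub, mul_one, hma, Nat.cast_sub hk]
  rcases eq_or_lt_of_le hp0 with hp0' | hp0'
  · -- p = 0
    have hp : p = 0 := hp0'.symm
    have hak : a = 0 := by
      by_contra hne; exact hfin ⟨Or.inl hp, by rw [hp]; exact hne⟩
    have hk0 : k = 0 := by
      by_contra h
      have hne : (k:ℝ) ≠ 0 := Nat.cast_ne_zero.mpr h
      exact hne (by rw [ha, div_eq_zero_iff] at hak; exact hak.resolve_right (ne_of_gt hm0))
    subst hk0
    rw [hp]
    simp [klBin, hak, Real.logb]
  rcases eq_or_lt_of_le hp1 with hp1' | hp1'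
  · -- p = 1
    have hak : a = 1 := by
      by_contra hne; exact hfin ⟨Or.inr hp1', by rw [hp1']; exact hne⟩
    have hkm : k = m := by
      have h2 : (k:ℝ) = m := by
        have h3 := hma; rw [hak, mul_one] at h3; exact h3.symm
      exact_mod_cast h2
    subst hkm
    rw [hp1']
    simp [klBin, hak, Real.logb]
  -- 0 < p < 1
  have h1p : (0:ℝ) < 1 - p := by linarith
  set u : ℝ := if k = 0 then 1 else p / a with hu
  set v : ℝ := if k = m then 1 else (1 - p) / (1 - a) with hv
  have hapos : k ≠ 0 → 0 < a := by
    intro h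
    have : (0:ℝ) < k := by exact_mod_cast Nat.pos_of_ne_zero h
    rw [ha]; exact div_pos this hm0
  have h1apos : k ≠ m → 0 < 1 - a := by
    intro h
    have hlt : (k:ℝ) < m := by exact_mod_cast lt_of_le_of_ne hk h
    have : a < 1 := by rw [ha, div_lt_one hm0]; exact hlt
    linarith
  have hu0 : 0 < u := by
    rw [hu]; split
    · norm_num
    · rename_i h; exact div_pos hp0' (hapos h)
  have hv0 : 0 < v := by
    rw [hv]; split
    · norm_num
    · rename_i h; exact div_pos h1p (h1apos h)
  have claimA : -(m:ℝ) * klBin a p = k * Real.logb 2 u + ((m-k:ℕ):ℝ) * Real.logb 2 v := by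
    have e1 : -((m:ℝ) * (a * Real.logb 2 (a / p))) = (k:ℝ) * Real.logb 2 u := by
      by_cases h : k = 0
      · subst h
        have h5 : a = 0 := by rw [ha]; simp
        simp [h5, hu]
      · have hapos' := hapos h
        rw [hu, if_neg h, ← mul_assoc, hma,
          Real.logb_div (ne_of_gt hp0') (ne_of_gt hapos'),
          Real.logb_div (ne_of_gt hapos') (ne_of_gt hp0')]
        ring
    have e2 : -((m:ℝ) * ((1-a) * Real.logb 2 ((1-a) / (1-p)))) = ((m-k:ℕ):ℝ) * Real.logb 2 v := by
      by_cases h : k = m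
      · subst h
        have h5 : a = 1 := by rw [ha, div_self (ne_of_gt hm0)]
        simp [h5, hv]
      · have hapos' := h1apos h
        rw [hv, if_neg h, ← mul_assoc, hma',
          Real.logb_div (ne_of_gt h1p) (ne_of_gt hapos'),
          Real.logb_div (ne_of_gt hapos') (ne_of_gt h1p)]
        ring
    rw [klBin, ← e1, ← e2]
    ring
  have claimB : (2:ℝ) ^ (-(m:ℝ) * klBin a p) = u ^ k * v ^ (m-k) := by
    rw [claimA, Real.rpow_add (by norm_num), rpow_mul_logb' k hu0, rpow_mul_logb' (m-k) hv0]
  rw [claimB]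
  have hua : a ^ k * u ^ k = p ^ k := by
    by_cases h : k = 0
    · subst h; simp
    · rw [hu, if_neg h, ← mul_pow, mul_div_cancel₀ p (ne_of_gt (hapos h))]
  have hva : (1-a) ^ (m-k) * v ^ (m-k) = (1-p) ^ (m-k) := by
    by_cases h : k = m
    · subst h; simp
    · rw [hv, if_neg h, ← mul_pow, mul_div_cancel₀ (1-p) (ne_of_gt (h1apos h))]
  calc (m.choose k : ℝ) * p ^ k * (1 - p) ^ (m - k)
      = (a ^ k * (1 - a) ^ (m - k) * (m.choose k : ℝ)) * (u ^ k * v ^ (m-k)) := by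
        rw [← hua, ← hva]; ring
    _ ≤ 1 * (u ^ k * v ^ (m-k)) := by
        apply mul_le_mul_of_nonneg_right (term_le_one' ha0 ha1 m k hk)
        positivity
    _ = u ^ k * v ^ (m-k) := one_mul _

end AuxReal

section AuxBinom
open MeasureTheory Finset

variable {Y : Type*} [MeasurableSpace Y] (D : MeasureTheory.Measure Y) [IsProbabilityMeasure D]
  (P : Y → Prop) [DecidablePred P] (m : ℕ)

/-- Rectangle set used for the binomial decomposition. -/
def pacRect (T : Finset (Fin m)) : Set (Fin m → Y) :=
  Set.univ.pi fun t => if t ∈ T then {p | P p} else {p | P p}ᶜ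

omit [MeasurableSpace Y] in
lemma mem_pacRect_iff (T : Finset (Fin m)) (S : Fin m → Y) :
    S ∈ pacRect P m T ↔ (Finset.univ.filter fun t => P (S t)) = T := by
  constructor
  · intro h
    ext t
    have ht := h t (Set.mem_univ t)
    simp only [Finset.mem_filter, Finset.mem_univ, true_and]
    by_cases htT : t ∈ T <;> simp [htT] at ht ⊢ <;> exact ht
  · intro h t _
    by_cases htT : t ∈ T <;> simp only [htT, if_pos, if_neg, not_false_iff] <;>
      [skip; skip] <;> subst h <;> simp_all [Finset.mem_filter]

omit [DecidablePred P] in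
lemma pacRect_measurable (hP : MeasurableSet {p | P p}) (T : Finset (Fin m)) :
    MeasurableSet (pacRect P m T) := by
  apply MeasurableSet.univ_pi
  intro t
  by_cases h : t ∈ T <;> simp only [pacRect, h, if_pos, if_neg, not_false_iff]
  · exact hP
  · exact hP.compl

omit [MeasurableSpace Y] in
lemma card_filter_eq_iUnion (k : ℕ) :
    {S : Fin m → Y | (Finset.univ.filter fun t => P (S t)).card = k}
      = ⋃ T ∈ Finset.univ.powersetCard k, pacRect P m T := by
  ext S
  simp only [Set.mem_setOf_eq, Set.mem_iUnion, mem_pacRect_iff, Finset.mem_powersetCard,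
    Finset.subset_univ, true_and, exists_prop]
  constructor
  · intro h; exact ⟨_, h, rfl⟩
  · rintro ⟨T, hT, rfl⟩; exact hT

lemma binom_measure (hP : MeasurableSet {p | P p}) (k : ℕ) :
    MeasureTheory.Measure.pi (fun _ : Fin m => D)
        {S | (Finset.univ.filter fun t => P (S t)).card = k}
      = (m.choose k) * (D {p | P p})^k * (D {p | P p}ᶜ)^(m-k) := by
  rw [card_filter_eq_iUnion, measure_biUnion_finset]
  · have h : ∀ T ∈ Finset.univ.powersetCard k,
        MeasureTheory.Measure.pi (fun _ : Fin m => D) (pacRect P m T)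
          = (D {p | P p})^k * (D {p | P p}ᶜ)^(m-k) := by
      intro T hT
      rw [Finset.mem_powersetCard] at hT
      rw [pacRect, MeasureTheory.Measure.pi_pi]
      simp only [apply_ite D, Finset.prod_ite, Finset.prod_const]
      have h1 : Finset.univ.filter (· ∈ T) = T := by simp
      have h2 : (Finset.univ.filter (· ∉ T)).card = m - k := by
        rw [Finset.filter_not, h1]
        simp [Finset.card_sdiff, hT.2]
      rw [h1, h2, hT.2]
    rw [Finset.sum_congr rfl h, Finset.sum_const, Finset.card_powersetCard,
      Finset.card_univ, Fintype.card_fin, nsmul_eq_mul, mul_assoc]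
  · intro T hT T' hT' hne
    simp only [Function.onFun, Set.disjoint_left]
    intro S hS hS'
    rw [mem_pacRect_iff] at hS hS'
    exact hne (hS ▸ hS')
  · exact fun T _ => pacRect_measurable P m hP T

end AuxBinom

theorem pac_bayes_kl_bound
    (X : Type) [MeasurableSpace X] (I : Type) (L : LearningSetup X I)
    (m : ℕ) (hm : 1 ≤ m) (δ : ℝ) (hδ0 : 0 < δ) (hδ1 : δ < 1) :
    ENNReal.ofReal (1 - δ) ≤
      L.sampleMeasure m
        {S | ∀ i : I, 0 < L.prior i →
          klBinE (L.empErr m i S) (L.popErr i) ≤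
            (((L.desc i + Real.logb 2 ((m + 1) / δ)) / m : ℝ) : EReal)} := by
  classical
  haveI := L.isProb
  haveI := L.countable
  have hm0 : (0:ℝ) < m := by exact_mod_cast hm
  have hm1 : (0:ℝ) < (m:ℝ) + 1 := by linarith
  set μ := L.sampleMeasure m with hμ
  haveI : IsProbabilityMeasure μ := by
    rw [hμ, LearningSetup.sampleMeasure]; infer_instance
  set E : I → Set (X × Bool) := fun i => {p | L.hyp i p.1 ≠ p.2} with hEdef
  have hE : ∀ i, MeasurableSet (E i) := by
    intro i
    have h1 : MeasurableSet {p : X × Bool | L.hyp i p.1 = p.2} :=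
      measurableSet_eq_fun ((L.hyp_measurable i).comp measurable_fst)
        measurable_snd
    exact h1.compl
  set ε : I → ℝ := fun i => (L.desc i + Real.logb 2 (((m:ℝ) + 1) / δ)) / m with hεdef
  have hDE_ne_top : ∀ i, L.D (E i) ≠ ⊤ := fun i => measure_ne_top _ _
  have hp0 : ∀ i, 0 ≤ L.popErr i := fun i => ENNReal.toReal_nonneg
  have hp1 : ∀ i, L.popErr i ≤ 1 := by
    intro i
    have := prob_le_one (μ := L.D) (s := E i)
    calc L.popErr i = (L.D (E i)).toReal := rfl
      _ ≤ (1 : ℝ≥0∞).toReal := ENNReal.toReal_mono (by norm_num) this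
      _ = 1 := by simp
  have hDE : ∀ i, L.D (E i) = ENNReal.ofReal (L.popErr i) := fun i =>
    (ENNReal.ofReal_toReal (hDE_ne_top i)).symm
  have hDEc : ∀ i, L.D (E i)ᶜ = ENNReal.ofReal (1 - L.popErr i) := by
    intro i
    rw [measure_compl (hE i) (hDE_ne_top i), measure_univ, hDE i,
      show (1:ℝ≥0∞) = ENNReal.ofReal 1 by simp,
      ← ENNReal.ofReal_sub 1 (hp0 i)]
  have hcount : ∀ i k, μ {S | L.errCount m i S = k}
      = ENNReal.ofReal ((m.choose k : ℝ) * (L.popErr i)^k * (1 - L.popErr i)^(m-k)) := by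
    intro i k
    have h0 : μ {S | L.errCount m i S = k}
        = (m.choose k) * (L.D (E i))^k * (L.D (E i)ᶜ)^(m-k) :=
      binom_measure L.D (fun y : X × Bool => L.hyp i y.1 ≠ y.2) m (hE i) k
    have h1p' : (0:ℝ) ≤ 1 - L.popErr i := by linarith [hp1 i]
    rw [h0, hDE i, hDEc i,
      ENNReal.ofReal_mul (mul_nonneg (Nat.cast_nonneg _) (pow_nonneg (hp0 i) k)),
      ENNReal.ofReal_mul (Nat.cast_nonneg _),
      ENNReal.ofReal_pow (hp0 i), ENNReal.ofReal_pow h1p', ENNReal.ofReal_natCast]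
  -- key per-(i,k) bound
  have hbadk : ∀ i, 0 < L.prior i → ∀ k, k ≤ m →
      ¬(klBinE ((k:ℝ)/m) (L.popErr i) ≤ ((ε i : ℝ) : EReal)) →
      μ {S | L.errCount m i S = k} ≤ ENNReal.ofReal (L.prior i * (δ / ((m:ℝ)+1))) := by
    intro i hpi k hk hbad
    rw [hcount i k]
    by_cases hcase : ((L.popErr i = 0 ∨ L.popErr i = 1) ∧ ((k:ℝ)/m ≠ L.popErr i))
    · rcases hcase.1 with h0 | h1
      · have hk0 : k ≠ 0 := by
          intro h; subst h; exact hcase.2 (by rw [h0]; simp)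
        have hz : (L.popErr i)^k = 0 := by rw [h0]; exact zero_pow hk0
        rw [show (m.choose k:ℝ) * (L.popErr i)^k * (1 - L.popErr i)^(m-k) = 0 by
          rw [hz]; ring]
        simp
      · have hkm : k ≠ m := by
          intro h; subst h
          exact hcase.2 (by rw [h1, div_self (ne_of_gt hm0)])
        have hmk : m - k ≠ 0 := Nat.sub_ne_zero_of_lt (lt_of_le_of_ne hk hkm)
        have hz : (1 - L.popErr i)^(m-k) = 0 := by
          rw [h1, sub_self]; exact zero_pow hmk
        rw [show (m.choose k:ℝ) * (L.popErr i)^k * (1 - L.popErr i)^(m-k) = 0 by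
          rw [hz]; ring]
        simp
    · have hklE : klBinE ((k:ℝ)/m) (L.popErr i)
          = ((klBin ((k:ℝ)/m) (L.popErr i) : ℝ) : EReal) := if_neg hcase
      rw [hklE] at hbad
      have hlt : ε i ≤ klBin ((k:ℝ)/m) (L.popErr i) := by
        by_contra h
        exact hbad (EReal.coe_le_coe_iff.mpr (le_of_lt (not_le.mp h)))
      have hch := chernoff_pt m k hm hk (hp0 i) (hp1 i) hcase
      have h2 : (2:ℝ) ^ (-(m:ℝ) * klBin ((k:ℝ)/m) (L.popErr i)) ≤ (2:ℝ) ^ (-(m:ℝ) * ε i) := by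
        apply Real.rpow_le_rpow_of_exponent_le (by norm_num)
        nlinarith
      have hmε : (m:ℝ) * ε i = L.desc i + Real.logb 2 (((m:ℝ) + 1) / δ) := by
        rw [hεdef]
        field_simp
      have h4 : -(m:ℝ) * ε i = Real.logb 2 (L.prior i) + Real.logb 2 (δ / ((m:ℝ)+1)) := by
        have hd : L.desc i = -Real.logb 2 (L.prior i) := rfl
        have hinv : Real.logb 2 (δ / ((m:ℝ)+1)) = -Real.logb 2 (((m:ℝ)+1) / δ) := by
          rw [← Real.logb_inv, inv_div]
        rw [neg_mul, hmε, hd, hinv]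
        ring
      have h3 : (2:ℝ) ^ (-(m:ℝ) * ε i) = L.prior i * (δ / ((m:ℝ)+1)) := by
        rw [h4, Real.rpow_add (by norm_num),
          Real.rpow_logb (by norm_num) (by norm_num) hpi,
          Real.rpow_logb (by norm_num) (by norm_num) (by positivity)]
      exact ENNReal.ofReal_le_ofReal (le_trans hch (h2.trans_eq h3))
  -- bad sets
  set badK : I → ℕ → Set (Fin m → X × Bool) := fun i k =>
    if ¬(klBinE ((k:ℝ)/m) (L.popErr i) ≤ ((ε i : ℝ) : EReal)) then
      {S | L.errCount m i S = k} else ∅ with hbadKdef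
  set bigBad : I → Set (Fin m → X × Bool) := fun i =>
    ⋃ k ∈ Finset.range (m+1), badK i k with hbigBaddef
  set bad' : I → Set (Fin m → X × Bool) := fun i =>
    if 0 < L.prior i then bigBad i else ∅ with hbad'def
  have hmeasC : ∀ i k, MeasurableSet {S : Fin m → X × Bool | L.errCount m i S = k} := by
    intro i k
    have h0 : {S : Fin m → X × Bool | L.errCount m i S = k}
        = ⋃ T ∈ Finset.univ.powersetCard k,
            pacRect (fun y : X × Bool => L.hyp i y.1 ≠ y.2) m T :=
      card_filter_eq_iUnion (fun y : X × Bool => L.hyp i y.1 ≠ y.2) m k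
    rw [h0]
    exact (Finset.univ.powersetCard k).measurableSet_biUnion
      (fun T _ => pacRect_measurable _ m (hE i) T)
  have hmeasBad : MeasurableSet (⋃ i, bad' i) := by
    apply MeasurableSet.iUnion
    intro i
    simp only [hbad'def]
    split
    · apply Finset.measurableSet_biUnion
      intro k _
      simp only [hbadKdef]
      split
      · exact hmeasC i k
      · exact MeasurableSet.empty
    · exact MeasurableSet.empty
  have hbig : ∀ i, 0 < L.prior i → μ (bigBad i) ≤ ENNReal.ofReal (L.prior i * δ) := by
    intro i hpi
    calc μ (bigBad i) ≤ ∑ k ∈ Finset.range (m+1), μ (badK i k) :=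
          measure_biUnion_finset_le _ _
      _ ≤ ∑ k ∈ Finset.range (m+1), ENNReal.ofReal (L.prior i * (δ/((m:ℝ)+1))) := by
          apply Finset.sum_le_sum
          intro k hkmem
          rw [Finset.mem_range] at hkmem
          have hk : k ≤ m := Nat.lt_succ_iff.mp hkmem
          simp only [hbadKdef]
          split
          · exact hbadk i hpi k hk (by assumption)
          · simp
      _ = ((m+1 : ℕ) : ℝ≥0∞) * ENNReal.ofReal (L.prior i * (δ/((m:ℝ)+1))) := by
          rw [Finset.sum_const, Finset.card_range, nsmul_eq_mul]
      _ = ENNReal.ofReal (L.prior i * δ) := by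
          rw [← ENNReal.ofReal_natCast,
            ← ENNReal.ofReal_mul (by positivity)]
          congr 1
          push_cast
          field_simp
  have hunion : μ (⋃ i, bad' i) ≤ ENNReal.ofReal δ := by
    calc μ (⋃ i, bad' i) ≤ ∑' i, μ (bad' i) := measure_iUnion_le _
      _ ≤ ∑' i, ENNReal.ofReal (L.prior i) * ENNReal.ofReal δ := by
          apply ENNReal.tsum_le_tsum
          intro i
          simp only [hbad'def]
          split
          · rename_i hpi
            refine (hbig i hpi).trans ?_
            rw [← ENNReal.ofReal_mul (L.prior_nonneg i)]
          · simp
      _ = (∑' i, ENNReal.ofReal (L.prior i)) * ENNReal.ofReal δ := ENNReal.tsum_mul_right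
      _ ≤ 1 * ENNReal.ofReal δ := mul_le_mul_left L.prior_tsum_le_one _
      _ = ENNReal.ofReal δ := one_mul _
  have hsub : (⋃ i, bad' i)ᶜ ⊆
      {S | ∀ i : I, 0 < L.prior i →
        klBinE (L.empErr m i S) (L.popErr i) ≤
          (((L.desc i + Real.logb 2 ((m + 1) / δ)) / m : ℝ) : EReal)} := by
    intro S hS i hpi
    have hSi : S ∉ bigBad i := by
      intro h
      exact hS (Set.mem_iUnion.mpr ⟨i, by simpa [hbad'def, hpi] using h⟩)
    have hk : L.errCount m i S ≤ m := by
      calc L.errCount m i S ≤ (Finset.univ : Finset (Fin m)).card :=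
            Finset.card_filter_le _ _
        _ = m := by simp
    by_contra hbadS
    apply hSi
    simp only [hbigBaddef]
    refine Set.mem_biUnion (Finset.mem_coe.mpr (Finset.mem_range.mpr (Nat.lt_succ_of_le hk))) ?_
    simp only [hbadKdef]
    rw [if_pos (by exact hbadS)]
    exact rfl
  calc ENNReal.ofReal (1 - δ) = 1 - ENNReal.ofReal δ := by
        rw [ENNReal.ofReal_sub 1 hδ0.le, ENNReal.ofReal_one]
    _ ≤ 1 - μ (⋃ i, bad' i) := tsub_le_tsub_left hunion 1
    _ = μ ((⋃ i, bad' i)ᶜ) := by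
        rw [measure_compl hmeasBad (measure_ne_top μ _), measure_univ]
    _ ≤ _ := measure_mono hsub
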